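/- If ω₁, ω₂, ω₃ > 0 satisfy ωᵢ ≤ 2/7 for i = 1,2,3 and ω₁ + ω₂ + ω₃ < 1, then setting αᵢ = arcsin(√(7ωᵢ/2)) yields (1/7)·X Xᵀ = diag(ω₁, ω₂, ω₃, 1 − ω₁ − ω₂ − ω₃), where X is the 7-sample matrix determined by α₁, α₂, α₃. -/
import Mathlib


open Matrix Real

noncomputable def sampleX (α₁ α₂ α₃ : ℝ) : Matrix (Fin 4) (Fin 7) ℝ :=
  Matrix.of
    ![![0, Real.sin α₁, -Real.sin α₁, 0, 0, 0, 0],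
      ![0, 0, 0, Real.sin α₂, -Real.sin α₂, 0, 0],
      ![0, 0, 0, 0, 0, Real.sin α₃, -Real.sin α₃],
      ![1, Real.cos α₁, Real.cos α₁, Real.cos α₂, Real.cos α₂, Real.cos α₃, Real.cos α₃]]

lemma sin_arcsin_sqrt_sq {x : ℝ} (h0 : 0 ≤ x) (h1 : x ≤ 1) :
    Real.sin (Real.arcsin (Real.sqrt x)) ^ 2 = x := by
  have hle : Real.sqrt x ≤ 1 := by
    rw [show (1:ℝ) = Real.sqrt 1 by simp]
    exact Real.sqrt_le_sqrt h1
  have hge : (-1 : ℝ) ≤ Real.sqrt x := by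
    have := Real.sqrt_nonneg x; linarith
  rw [Real.sin_arcsin hge hle, Real.sq_sqrt h0]

lemma cos_arcsin_sqrt_sq {x : ℝ} (h0 : 0 ≤ x) (h1 : x ≤ 1) :
    Real.cos (Real.arcsin (Real.sqrt x)) ^ 2 = 1 - x := by
  have := Real.sin_sq_add_cos_sq (Real.arcsin (Real.sqrt x))
  rw [sin_arcsin_sqrt_sq h0 h1] at this
  linarith

lemma vec7_five {α : Type*} (a₀ a₁ a₂ a₃ a₄ a₅ a₆ : α) :
    ![a₀, a₁, a₂, a₃, a₄, a₅, a₆] 5 = a₅ := rfl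

lemma vec7_six {α : Type*} (a₀ a₁ a₂ a₃ a₄ a₅ a₆ : α) :
    ![a₀, a₁, a₂, a₃, a₄, a₅, a₆] 6 = a₆ := rfl

set_option maxHeartbeats 1000000 in
lemma sample_aux (a₁ a₂ a₃ w₁ w₂ w₃ : ℝ)
    (s1 : Real.sin a₁ ^ 2 = 7 * w₁ / 2) (s2 : Real.sin a₂ ^ 2 = 7 * w₂ / 2)
    (s3 : Real.sin a₃ ^ 2 = 7 * w₃ / 2)
    (c1 : Real.cos a₁ ^ 2 = 1 - 7 * w₁ / 2) (c2 : Real.cos a₂ ^ 2 = 1 - 7 * w₂ / 2)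
    (c3 : Real.cos a₃ ^ 2 = 1 - 7 * w₃ / 2) :
    (1 / 7 : ℝ) • (sampleX a₁ a₂ a₃ * (sampleX a₁ a₂ a₃)ᵀ)
      = Matrix.diagonal ![w₁, w₂, w₃, 1 - w₁ - w₂ - w₃] := by
  have key : ∀ i j, (sampleX a₁ a₂ a₃ * (sampleX a₁ a₂ a₃)ᵀ) i j
      = ∑ k, sampleX a₁ a₂ a₃ i k * sampleX a₁ a₂ a₃ j k := by
    intro i j
    simp [Matrix.mul_apply]
  ext i j
  rw [Matrix.smul_apply, key]
  fin_cases i <;> fin_cases j <;>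
    simp [sampleX, Fin.sum_univ_seven, Matrix.diagonal, vec7_five, vec7_six] <;>
    nlinarith [s1, s2, s3, c1, c2, c3]

theorem sample_matching_covariance (ω₁ ω₂ ω₃ : ℝ)
    (h₁ : 0 < ω₁) (h₂ : 0 < ω₂) (h₃ : 0 < ω₃)
    (hb₁ : ω₁ ≤ 2 / 7) (hb₂ : ω₂ ≤ 2 / 7) (hb₃ : ω₃ ≤ 2 / 7)
    (hsum : ω₁ + ω₂ + ω₃ < 1) :
    (1 / 7 : ℝ) • (sampleX (Real.arcsin (Real.sqrt (7 * ω₁ / 2)))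
        (Real.arcsin (Real.sqrt (7 * ω₂ / 2))) (Real.arcsin (Real.sqrt (7 * ω₃ / 2)))
      * (sampleX (Real.arcsin (Real.sqrt (7 * ω₁ / 2)))
        (Real.arcsin (Real.sqrt (7 * ω₂ / 2))) (Real.arcsin (Real.sqrt (7 * ω₃ / 2))))ᵀ)
      = Matrix.diagonal ![ω₁, ω₂, ω₃, 1 - ω₁ - ω₂ - ω₃] := by
  exact sample_aux _ _ _ _ _ _
    (sin_arcsin_sqrt_sq (by positivity) (by linarith))
    (sin_arcsin_sqrt_sq (by positivity) (by linarith))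
    (sin_arcsin_sqrt_sq (by positivity) (by linarith))
    (cos_arcsin_sqrt_sq (by positivity) (by linarith))
    (cos_arcsin_sqrt_sq (by positivity) (by linarith))
    (cos_arcsin_sqrt_sq (by positivity) (by linarith))
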